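/- Let α be a finite alphabet and a ∈ α. The language L = {ε, a} (containing only the empty word and the one-letter word a) is finite, suffix-closed, and commutative, but L is neither a star language nor a two-sided comet. -/

import Mathlib

open Language Computability

universe u

variable {α : Type}

/-- The n-fold repetition (power) of a word. -/
def wordPow (y : List α) : ℕ → List α
  | 0 => []
  | n + 1 => y ++ wordPow y n

/-- A star language: the Kleene star of some regular language. -/
def IsStarLang (L : Language α) : Prop :=
  ∃ H : Language α, H.IsRegular ∧ L = H∗

/-- A left-sided comet. -/
def IsLeftComet (L : Language α) : Prop :=
  ∃ E G : Language α, E.IsRegular ∧ G.IsRegular ∧ G ≠ 0 ∧ G ≠ 1 ∧ L = E * G∗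

/-- A right-sided comet. -/
def IsRightComet (L : Language α) : Prop :=
  ∃ G H : Language α, G.IsRegular ∧ H.IsRegular ∧ G ≠ 0 ∧ G ≠ 1 ∧ L = G∗ * H

/-- A two-sided comet. -/
def IsTwoComet (L : Language α) : Prop :=
  ∃ E G H : Language α, E.IsRegular ∧ G.IsRegular ∧ H.IsRegular ∧
    G ≠ 0 ∧ G ≠ 1 ∧ L = E * G∗ * H

/-- A regular expression is union-free if it is built from the atoms `0` (empty language)
and single letters using only concatenation and Kleene star. -/
def RegularExpression.UnionFree : RegularExpression α → Prop
  | RegularExpression.zero => True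
  | RegularExpression.epsilon => False
  | RegularExpression.char _ => True
  | RegularExpression.plus _ _ => False
  | RegularExpression.comp r s => r.UnionFree ∧ s.UnionFree
  | RegularExpression.star r => r.UnionFree

/-- A union-free language: the language of a union-free regular expression. -/
def IsUnionFree (L : Language α) : Prop :=
  ∃ r : RegularExpression α, r.UnionFree ∧ r.matches' = L

/-- A monoidal language. -/
def IsMonoidal (L : Language α) : Prop := L = (⊤ : Language α)

/-- The language of one-letter words with letters from `X`. -/
def lettersLang (X : Set α) : Language α := {w : List α | ∃ a ∈ X, w = [a]}

/-- A combinational language: `⊤ · X` for a set `X` of one-letter words. -/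
def IsCombinational (L : Language α) : Prop :=
  ∃ X : Set α, L = (⊤ : Language α) * lettersLang X

/-- A symmetric definite language: `E · ⊤ · H` with `E, H` regular. -/
def IsSymDef (L : Language α) : Prop :=
  ∃ E H : Language α, E.IsRegular ∧ H.IsRegular ∧ L = E * (⊤ : Language α) * H

/-- A nilpotent language: finite or with finite complement. -/
def IsNilpotentLang (L : Language α) : Prop := L.Finite ∨ (Lᶜ : Language α).Finite

/-- A definite language: `A ∪ ⊤ · B` with `A, B` finite. -/
def IsDefinite (L : Language α) : Prop :=
  ∃ A B : Language α, A.Finite ∧ B.Finite ∧ L = A + (⊤ : Language α) * B  -- `+` of languages is union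

/-- An ordered language: accepted by a DFA with linearly ordered state set
whose transition maps are all monotone. -/
def IsOrdered (L : Language α) : Prop :=
  ∃ (σ : Type) (_ : Fintype σ) (_ : LinearOrder σ) (M : DFA α σ),
    (∀ a : α, Monotone fun q => M.step q a) ∧ M.accepts = L

/-- The non-counting property. -/
def HasNonCounting (L : Language α) : Prop :=
  ∃ k : ℕ, 1 ≤ k ∧ ∀ x y z : List α,
    (x ++ wordPow y k ++ z ∈ L ↔ x ++ wordPow y (k + 1) ++ z ∈ L)

/-- A non-counting (star-free) regular language. -/
def IsNonCounting (L : Language α) : Prop := L.IsRegular ∧ HasNonCounting L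

/-- The power-separating property. -/
def HasPowerSep (L : Language α) : Prop :=
  ∃ m : ℕ, 1 ≤ m ∧ ∀ x : List α,
    (∀ n, m ≤ n → wordPow x n ∉ L) ∨ (∀ n, m ≤ n → wordPow x n ∈ L)

/-- A power-separating regular language. -/
def IsPowerSep (L : Language α) : Prop := L.IsRegular ∧ HasPowerSep L

/-- A suffix-closed (regular) language. -/
def IsSuffixClosed (L : Language α) : Prop :=
  L.IsRegular ∧ ∀ x y : List α, x ++ y ∈ L → y ∈ L

/-- A circular (regular) language. -/
def IsCircular (L : Language α) : Prop :=
  L.IsRegular ∧ ∀ u v : List α, u ++ v ∈ L → v ++ u ∈ L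

/-- A commutative (regular) language. -/
def IsCommutative (L : Language α) : Prop :=
  L.IsRegular ∧ ∀ w ∈ L, ∀ v : List α, w.Perm v → v ∈ L

/-- The reversal of a language. -/
def Reversal (L : Language α) : Language α := {w : List α | ∃ v ∈ L, w = v.reverse}

/-- Two families of languages are incomparable if neither is contained in the other. -/
def Incomparable (P Q : Language α → Prop) : Prop :=
  (∃ L : Language α, P L ∧ ¬ Q L) ∧ (∃ L : Language α, Q L ∧ ¬ P L)

/-- A finite language. -/
def IsFiniteLang (L : Language α) : Prop := L.Finite

open Classical in
private noncomputable def epsADFA (a : α) : DFA α (Fin 3) where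
  step q b := if q = 0 ∧ b = a then 1 else 2
  start := 0
  accept := {0, 1}

open Classical in
private lemma evalFrom_ne_zero (a : α) (q : Fin 3) (hq : q ≠ 0) (x : List α) (hx : x ≠ []) :
    (epsADFA a).evalFrom q x = 2 := by
  induction x generalizing q with
  | nil => exact absurd rfl hx
  | cons b xs ih =>
    have hstep : (epsADFA a).step q b = 2 := by
      simp [epsADFA, hq]
    rcases eq_or_ne xs [] with rfl | h
    · simpa [DFA.evalFrom] using hstep
    · have : (epsADFA a).evalFrom q (b :: xs) = (epsADFA a).evalFrom ((epsADFA a).step q b) xs := rfl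
      rw [this, hstep, ih 2 (by decide) h]

open Classical in
private lemma epsADFA_accepts (a : α) : (epsADFA a).accepts = ({[], [a]} : Language α) := by
  ext x
  rw [DFA.mem_accepts]
  constructor
  · intro hx
    match x with
    | [] => exact Or.inl rfl
    | b :: xs =>
      have hstart : (epsADFA a).start = 0 := rfl
      by_cases hb : b = a
      · rcases eq_or_ne xs [] with rfl | h
        · subst hb; exact Or.inr rfl
        · have hstep : (epsADFA a).step 0 b = 1 := by simp [epsADFA, hb]
          have hx' : (epsADFA a).evalFrom ((epsADFA a).step 0 b) xs ∈ (epsADFA a).accept := hx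
          have h2 := evalFrom_ne_zero a 1 (by decide) xs h
          rw [hstep, h2] at hx'
          simp [epsADFA] at hx'
      · have hstep : (epsADFA a).step 0 b = 2 := by simp [epsADFA, hb]
        have hx' : (epsADFA a).evalFrom ((epsADFA a).step 0 b) xs ∈ (epsADFA a).accept := hx
        rcases eq_or_ne xs [] with rfl | h
        · rw [hstep] at hx'; simp [epsADFA] at hx'
        · rw [hstep, evalFrom_ne_zero a 2 (by decide) xs h] at hx'
          simp [epsADFA] at hx'
  · rintro (rfl | rfl)
    · show (epsADFA a).evalFrom _ [] ∈ _; left; rfl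
    · show (epsADFA a).evalFrom _ [a] ∈ _
      have : (epsADFA a).evalFrom 0 [a] = 1 := by simp [DFA.evalFrom, epsADFA]
      rw [show (epsADFA a).start = 0 from rfl, this]; right; rfl

private lemma epsA_regular (a : α) : ({[], [a]} : Language α).IsRegular :=
  ⟨Fin 3, inferInstance, epsADFA a, epsADFA_accepts a⟩

private lemma mem_epsA {a : α} {w : List α} :
    w ∈ ({[], [a]} : Language α) ↔ w = [] ∨ w = [a] := Iff.rfl

private lemma aa_not_mem (a : α) : [a, a] ∉ ({[], [a]} : Language α) := by
  intro h
  rcases mem_epsA.mp h with h | h <;> simp at h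


/-- `{ε, a}` is finite, suffix-closed and commutative, but neither a star language
nor a two-sided comet. -/
theorem epsA_not_star_not_twoComet [Fintype α] (a : α) :
    IsFiniteLang ({[], [a]} : Language α) ∧
    IsSuffixClosed ({[], [a]} : Language α) ∧
    IsCommutative ({[], [a]} : Language α) ∧
    ¬ IsStarLang ({[], [a]} : Language α) ∧
    ¬ IsTwoComet ({[], [a]} : Language α) := by
  refine ⟨(Set.finite_singleton [a]).insert [], ⟨epsA_regular a, ?_⟩, ⟨epsA_regular a, ?_⟩, ?_, ?_⟩
  · -- suffix-closed
    intro x y h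
    rcases mem_epsA.mp h with h | h
    · have : y = [] := (List.append_eq_nil_iff.mp h).2
      exact mem_epsA.mpr (Or.inl this)
    · match x with
      | [] => exact mem_epsA.mpr (Or.inr h)
      | b :: xs =>
        have := (List.cons.injEq _ _ _ _).mp h
        have hy : y = [] := (List.append_eq_nil_iff.mp this.2).2
        exact mem_epsA.mpr (Or.inl hy)
  · -- commutative
    intro w hw v hperm
    rcases mem_epsA.mp hw with rfl | rfl
    · exact mem_epsA.mpr (Or.inl hperm.nil_eq.symm)
    · exact mem_epsA.mpr (Or.inr (List.perm_singleton.mp hperm.symm))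
  · -- not star
    rintro ⟨H, -, hL⟩
    have ha : [a] ∈ H∗ := by rw [← hL]; exact mem_epsA.mpr (Or.inr rfl)
    have haH : [a] ∈ H := by
      rcases Language.mem_kstar_iff_exists_nonempty.mp ha with ⟨S, hS, hmem⟩
      match S, hS, hmem with
      | [], hS, _ => simp at hS
      | [] :: S', _, hmem => exact absurd rfl (hmem [] (by simp)).2
      | (b :: bs) :: S', hS, hmem =>
        simp only [List.flatten_cons, List.cons_append, List.cons.injEq] at hS
        obtain ⟨rfl, h2⟩ := hS
        have hbs : bs = [] := (List.append_eq_nil_iff.mp h2.symm).1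
        have := (hmem (a :: bs) (by simp)).1
        rwa [hbs] at this
    have haa : [a, a] ∈ H∗ := by
      have : [a, a] = List.flatten [[a], [a]] := rfl
      rw [this]
      exact Language.join_mem_kstar (by intro y hy; simp at hy; rcases hy with rfl | rfl <;> exact haH)
    rw [← hL] at haa
    exact aa_not_mem a haa
  · -- not two-comet
    rintro ⟨E, G, H, -, -, -, hG0, hG1, hL⟩
    -- [] ∈ E and [] ∈ H
    have hnil : [] ∈ E * G∗ * H := by rw [← hL]; exact mem_epsA.mpr (Or.inl rfl)
    rcases Language.mem_mul.mp hnil with ⟨u, hu, h', hh', huh⟩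
    rcases Language.mem_mul.mp hu with ⟨e, he, s, hs, hes⟩
    have hu0 : u = [] ∧ h' = [] := List.append_eq_nil_iff.mp huh
    have he0 : e = [] := (List.append_eq_nil_iff.mp (hu0.1 ▸ hes)).1
    have hE : [] ∈ E := he0 ▸ he
    have hH : [] ∈ H := hu0.2 ▸ hh'
    -- get g ∈ G, g ≠ []
    obtain ⟨g, hg, hgne⟩ : ∃ g ∈ G, g ≠ [] := by
      by_contra hc
      push_neg at hc
      apply hG1
      ext x
      constructor
      · intro hx; exact (hc x hx)
      · intro hx
        have hne : G.Nonempty := by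
          refine Set.nonempty_iff_ne_empty.mpr ?_
          intro h
          exact hG0 (by ext w; simp [h]; exact Set.notMem_empty w)
        obtain ⟨y, hy⟩ := hne
        rw [Language.mem_one] at hx
        subst hx
        exact (hc y hy) ▸ hy
    -- g ∈ L
    have hmem : ∀ w ∈ G∗, w ∈ ({[], [a]} : Language α) := by
      intro w hw
      rw [hL]
      have : ([] : List α) ++ w ++ [] ∈ E * G∗ * H :=
        Language.append_mem_mul (Language.append_mem_mul hE hw) hH
      simpa using this
    have hgstar : g ∈ G∗ := by
      have : g = List.flatten [g] := by simp
      rw [this]; exact Language.join_mem_kstar (by simpa using hg)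
    have hga : g = [a] := by
      rcases mem_epsA.mp (hmem g hgstar) with h | h
      · exact absurd h hgne
      · exact h
    have hgg : g ++ g ∈ G∗ := by
      have : g ++ g = List.flatten [g, g] := by simp
      rw [this]; exact Language.join_mem_kstar (by intro y hy; simp at hy; rcases hy with rfl | rfl <;> exact hg)
    have := hmem (g ++ g) hgg
    rw [hga] at this
    exact aa_not_mem a this
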